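/- Graded modal logic has the finite tree model property: every satisfiable GML formula is satisfied at the root of some finite tree model. -/

import Mathlib

/-- A Kripke model with proposition letters from `A` and worlds `W`. -/
structure Kripke (A W : Type) where
  R : W → W → Prop
  V : A → W → Prop

/-- Formulas of graded modal logic: φ ::= p | ¬φ | φ∧ψ | ◇ₖφ. -/
inductive GML (A : Type) : Type where
  | atom : A → GML A
  | neg : GML A → GML A
  | and : GML A → GML A → GML A
  | dia : ℕ → GML A → GML A

/-- Semantics of GML: `dia k φ` holds at `w` iff at least `k` distinct
`R`-successors of `w` satisfy `φ`. -/
def gsat {A W : Type} (M : Kripke A W) : W → GML A → Prop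
  | w, .atom p => M.V p w
  | w, .neg φ => ¬ gsat M w φ
  | w, .and φ ψ => gsat M w φ ∧ gsat M w ψ
  | w, .dia k φ => ∃ f : Fin k → W, Function.Injective f ∧
      ∀ i, M.R w (f i) ∧ gsat M (f i) φ

/-- `M` is a tree model with root `r`. -/
def IsTree {A W : Type} (M : Kripke A W) (r : W) : Prop :=
  (∀ v, Relation.ReflTransGen M.R r v) ∧
  (∀ v, ¬ M.R v r) ∧
  (∀ u u' v, M.R u v → M.R u' v → u = u') ∧
  (∀ v, ¬ Relation.TransGen M.R v v)

namespace GMLTree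

def depth {A : Type} : GML A → ℕ
  | .atom _ => 0
  | .neg φ => depth φ
  | .and φ ψ => max (depth φ) (depth ψ)
  | .dia _ φ => depth φ + 1

def Closed (Γ : List (GML ℕ)) : Prop :=
  ∀ ψ ∈ Γ, (∀ φ, ψ = .neg φ → φ ∈ Γ) ∧ (∀ φ χ, ψ = .and φ χ → φ ∈ Γ ∧ χ ∈ Γ) ∧
    (∀ k φ, ψ = .dia k φ → φ ∈ Γ)

def subs {A : Type} : GML A → List (GML A)
  | .atom p => [.atom p]
  | .neg φ => .neg φ :: subs φ
  | .and φ ψ => .and φ ψ :: (subs φ ++ subs ψ)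
  | .dia k φ => .dia k φ :: subs φ

lemma mem_subs_self {A : Type} (φ : GML A) : φ ∈ subs φ := by
  cases φ <;> simp [subs]

lemma subs_trans {A : Type} : ∀ (φ ψ : GML A), ψ ∈ subs φ → ∀ χ ∈ subs ψ, χ ∈ subs φ := by
  intro φ
  induction φ with
  | atom p => intro ψ h; simp [subs] at h; subst h; simp [subs]
  | neg φ ih =>
    intro ψ h χ hχ
    rcases (by simpa [subs] using h : ψ = .neg φ ∨ ψ ∈ subs φ) with rfl | h
    · exact hχ
    · simp [subs]; right; exact ih ψ h χ hχ
  | and φ₁ φ₂ ih1 ih2 =>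
    intro ψ h χ hχ
    rcases (by simpa [subs] using h : ψ = .and φ₁ φ₂ ∨ ψ ∈ subs φ₁ ∨ ψ ∈ subs φ₂) with rfl | h | h
    · exact hχ
    · simp [subs]; right; left; exact ih1 ψ h χ hχ
    · simp [subs]; right; right; exact ih2 ψ h χ hχ
  | dia k φ ih =>
    intro ψ h χ hχ
    rcases (by simpa [subs] using h : ψ = .dia k φ ∨ ψ ∈ subs φ) with rfl | h
    · exact hχ
    · simp [subs]; right; exact ih ψ h χ hχ

lemma closed_subs (φ : GML ℕ) : Closed (subs φ) := by
  intro ψ hψ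
  refine ⟨?_, ?_, ?_⟩
  · rintro χ rfl
    exact subs_trans φ _ hψ χ (by simp [subs, mem_subs_self])
  · rintro χ₁ χ₂ rfl
    exact ⟨subs_trans φ _ hψ χ₁ (by simp [subs, mem_subs_self]),
      subs_trans φ _ hψ χ₂ (by simp [subs, mem_subs_self])⟩
  · rintro k χ rfl
    exact subs_trans φ _ hψ χ (by simp [subs, mem_subs_self])

lemma depth_subs {A : Type} : ∀ (φ ψ : GML A), ψ ∈ subs φ → depth ψ ≤ depth φ := by
  intro φ
  induction φ with
  | atom p => intro ψ h; simp [subs] at h; subst h; simp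
  | neg φ ih =>
    intro ψ h
    rcases (by simpa [subs] using h : ψ = .neg φ ∨ ψ ∈ subs φ) with rfl | h
    · exact le_refl _
    · exact ih ψ h
  | and φ₁ φ₂ ih1 ih2 =>
    intro ψ h
    rcases (by simpa [subs] using h : ψ = .and φ₁ φ₂ ∨ ψ ∈ subs φ₁ ∨ ψ ∈ subs φ₂) with rfl | h | h
    · exact le_refl _
    · exact le_trans (ih1 ψ h) (le_max_left _ _)
    · exact le_trans (ih2 ψ h) (le_max_right _ _)
  | dia k φ ih =>
    intro ψ h
    rcases (by simpa [subs] using h : ψ = .dia k φ ∨ ψ ∈ subs φ) with rfl | h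
    · exact le_refl _
    · exact le_trans (ih ψ h) (by simp [depth])


section glue

variable {ι : Type} {cW : ι → Type} (cM : ∀ i, Kripke ℕ (cW i)) (cr : ∀ i, cW i)
  (rV : ℕ → Prop)

def glue : Kripke ℕ (Option (Σ i, cW i)) where
  R a b := (∃ i, a = none ∧ b = some ⟨i, cr i⟩) ∨
    (∃ i x y, a = some ⟨i, x⟩ ∧ b = some ⟨i, y⟩ ∧ (cM i).R x y)
  V p a := a.elim (rV p) (fun s => (cM s.1).V p s.2)

lemma osig {i j : ι} {x : cW i} {y : cW j}
    (h : (some ⟨i, x⟩ : Option (Σ i, cW i)) = some ⟨j, y⟩) : i = j ∧ HEq x y := by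
  injection h with h
  exact Sigma.mk.inj_iff.mp h

lemma gsat_glue : ∀ (ψ : GML ℕ) (i : ι) (x : cW i),
    gsat (glue cM cr rV) (some ⟨i, x⟩) ψ ↔ gsat (cM i) x ψ := by
  intro ψ
  induction ψ with
  | atom p => intro i x; simp [gsat, glue]
  | neg φ ih => intro i x; simp only [gsat]; rw [ih]
  | and φ χ ih1 ih2 => intro i x; simp only [gsat]; rw [ih1, ih2]
  | dia k φ ih =>
    intro i x
    constructor
    · rintro ⟨f, hinj, hf⟩
      have hy : ∀ j, ∃ y : cW i, f j = some ⟨i, y⟩ ∧ (cM i).R x y := by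
        intro j
        rcases (hf j).1 with ⟨i', h1, h2⟩ | ⟨i', a, b, h1, h2, h3⟩
        · exact absurd h1 (by simp)
        · obtain ⟨rfl, hb⟩ := osig h1
          rw [heq_iff_eq] at hb; subst hb
          exact ⟨b, h2, h3⟩
      choose g hg1 hg2 using hy
      refine ⟨g, ?_, fun j => ⟨hg2 j, ?_⟩⟩
      · intro j j' h
        apply hinj
        rw [hg1 j, hg1 j', h]
      · have := (hf j).2
        rw [hg1 j] at this
        exact (ih i (g j)).mp this
    · rintro ⟨g, hinj, hg⟩
      refine ⟨fun j => some ⟨i, g j⟩, ?_,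
        fun j => ⟨Or.inr ⟨i, x, g j, rfl, rfl, (hg j).1⟩, (ih i (g j)).mpr (hg j).2⟩⟩
      intro j j' h
      obtain ⟨-, h2⟩ := osig h
      exact hinj (heq_iff_eq.mp h2)

lemma glue_no_edge_to_none : ∀ a, ¬ (glue cM cr rV).R a none := by
  rintro a (⟨i, h1, h2⟩ | ⟨i, x, y, h1, h2, h3⟩) <;> simp at h2

lemma glue_isTree (ht : ∀ i, IsTree (cM i) (cr i)) : IsTree (glue cM cr rV) none := by
  refine ⟨?_, ?_, ?_, ?_⟩
  · rintro (_ | ⟨i, x⟩)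
    · exact .refl
    · have h1 : (glue cM cr rV).R none (some ⟨i, cr i⟩) := Or.inl ⟨i, rfl, rfl⟩
      have h2 : Relation.ReflTransGen (glue cM cr rV).R (some ⟨i, cr i⟩) (some ⟨i, x⟩) :=
        Relation.ReflTransGen.lift (f := fun y : cW i => (some ⟨i, y⟩ : Option (Σ i, cW i)))
          (fun a b h => Or.inr ⟨i, a, b, rfl, rfl, h⟩) _ _ ((ht i).1 x)
      exact .head h1 h2
  · exact fun v => glue_no_edge_to_none cM cr rV v
  · rintro u u' v hu hu'
    rcases hu with ⟨i, rfl, rfl⟩ | ⟨i, a, b, rfl, rfl, h3⟩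
    · rcases hu' with ⟨i', h1', h2'⟩ | ⟨i', a', b', h1', h2', h3'⟩
      · exact h1'.symm
      · obtain ⟨rfl, hb⟩ := osig h2'
        rw [heq_iff_eq] at hb
        subst hb
        exact absurd h3' ((ht i).2.1 a')
    · rcases hu' with ⟨i', h1', h2'⟩ | ⟨i', a', b', h1', h2', h3'⟩
      · obtain ⟨rfl, hb⟩ := osig h2'
        rw [heq_iff_eq] at hb
        subst hb
        exact absurd h3 ((ht i).2.1 a)
      · obtain ⟨rfl, hb⟩ := osig h2'
        rw [heq_iff_eq] at hb
        subst hb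
        rw [h1', (ht i).2.2.1 a' a b h3' h3]
  · have comp : ∀ (a b : Option (Σ i, cW i)), Relation.TransGen (glue cM cr rV).R a b →
        ∀ i (x : cW i), a = some ⟨i, x⟩ →
        ∃ y, b = some ⟨i, y⟩ ∧ Relation.TransGen (cM i).R x y := by
      intro a b h
      induction h with
      | single h =>
        rintro i x rfl
        rcases h with ⟨i', h1, h2⟩ | ⟨i', a', y, h1, h2, h3⟩
        · exact absurd h1 (by simp)
        · obtain ⟨rfl, hb⟩ := osig h1
          rw [heq_iff_eq] at hb; subst hb
          exact ⟨y, h2, .single h3⟩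
      | tail h1 h2 ih =>
        rintro i x rfl
        obtain ⟨y, rfl, hy⟩ := ih i x rfl
        rcases h2 with ⟨i', h1', h2'⟩ | ⟨i', a', y', h1', h2', h3'⟩
        · exact absurd h1' (by simp)
        · obtain ⟨rfl, hb⟩ := osig h1'
          rw [heq_iff_eq] at hb; subst hb
          exact ⟨y', h2', .tail hy h3'⟩
    rintro (_ | ⟨i, x⟩) hcyc
    · cases hcyc with
      | single h => exact glue_no_edge_to_none cM cr rV _ h
      | tail h1 h2 => exact glue_no_edge_to_none cM cr rV _ h2
    · obtain ⟨y, hy, hcy⟩ := comp _ _ hcyc i x rfl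
      obtain ⟨-, hb⟩ := osig hy
      rw [heq_iff_eq] at hb; subst hb
      exact (ht i).2.2.2 x hcy

end glue


lemma gsat_dia_finset {W : Type} (M : Kripke ℕ W) (w : W) (k : ℕ) (χ : GML ℕ)
    (h : gsat M w (.dia k χ)) :
    ∃ s : Finset W, s.card = k ∧ ∀ v ∈ s, M.R w v ∧ gsat M v χ := by
  classical
  obtain ⟨f, hinj, hf⟩ := h
  refine ⟨Finset.univ.image f, ?_, ?_⟩
  · rw [Finset.card_image_of_injective _ hinj, Finset.card_univ, Fintype.card_fin]
  · intro v hv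
    simp only [Finset.mem_image, Finset.mem_univ, true_and] at hv
    obtain ⟨j, rfl⟩ := hv
    exact hf j

lemma finset_to_inj {W : Type} (s : Finset W) {k : ℕ} (h : s.card = k) :
    ∃ f : Fin k → W, Function.Injective f ∧ ∀ j, f j ∈ s := by
  subst h
  exact ⟨fun j => (s.equivFin.symm j).1,
    fun a b hab => s.equivFin.symm.injective (Subtype.ext hab),
    fun j => (s.equivFin.symm j).2⟩

lemma key : ∀ (n : ℕ) (Γ : List (GML ℕ)), Closed Γ → (∀ ψ ∈ Γ, depth ψ ≤ n) →
    ∀ (W : Type) (M : Kripke ℕ W) (w : W),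
    ∃ (T : Type) (N : Kripke ℕ T) (r : T), Finite T ∧ IsTree N r ∧
      ∀ ψ ∈ Γ, (gsat N r ψ ↔ gsat M w ψ) := by
  intro n
  induction n with
  | zero =>
    intro Γ hcl hd W M w
    refine ⟨PUnit, ⟨fun _ _ => False, fun p _ => M.V p w⟩, PUnit.unit, inferInstance, ?_, ?_⟩
    · refine ⟨fun v => by cases v; exact .refl, fun v h => h, fun u u' v h => h.elim,
        fun v h => ?_⟩
      induction h with
      | single h => exact h
      | tail _ h => exact h
    · intro ψ
      induction ψ with
      | atom p => intro h; simp [gsat]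
      | neg φ ih => intro h; simp only [gsat]; rw [ih ((hcl _ h).1 φ rfl)]
      | and φ χ ih1 ih2 =>
        intro h
        obtain ⟨h1, h2⟩ := (hcl _ h).2.1 φ χ rfl
        simp only [gsat]; rw [ih1 h1, ih2 h2]
      | dia k φ ih => intro h; have := hd _ h; simp [depth] at this
  | succ n IH =>
    intro Γ hcl hd W M w
    classical
    have hmemΔ : ∀ ψ, ψ ∈ Γ.filter (fun ψ => decide (depth ψ ≤ n)) ↔ ψ ∈ Γ ∧ depth ψ ≤ n := by
      intro ψ; simp [List.mem_filter]
    set Δ := Γ.filter (fun ψ => decide (depth ψ ≤ n)) with hΔdef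
    have hclΔ : Closed Δ := by
      intro ψ hψ
      obtain ⟨h1, h2⟩ := (hmemΔ ψ).mp hψ
      have h3 := hcl ψ h1
      refine ⟨?_, ?_, ?_⟩
      · rintro φ rfl
        exact (hmemΔ φ).mpr ⟨h3.1 φ rfl, by simpa [depth] using h2⟩
      · rintro φ χ rfl
        obtain ⟨ha, hb⟩ := h3.2.1 φ χ rfl
        simp only [depth, max_le_iff] at h2
        exact ⟨(hmemΔ φ).mpr ⟨ha, h2.1⟩, (hmemΔ χ).mpr ⟨hb, h2.2⟩⟩
      · rintro k φ rfl
        refine (hmemΔ φ).mpr ⟨h3.2.2 k φ rfl, ?_⟩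
        simp only [depth] at h2; omega
    have hdΔ : ∀ ψ ∈ Δ, depth ψ ≤ n := fun ψ h => ((hmemΔ ψ).mp h).2
    have hex : ∀ ψ : GML ℕ, ∃ s : Finset W, (∀ v ∈ s, M.R w v) ∧
        ∀ k χ, ψ = .dia k χ → gsat M w ψ → s.card = k ∧ ∀ v ∈ s, gsat M v χ := by
      intro ψ
      cases ψ with
      | atom p => exact ⟨∅, by simp, fun k χ h => by simp at h⟩
      | neg φ => exact ⟨∅, by simp, fun k χ h => by simp at h⟩
      | and φ χ => exact ⟨∅, by simp, fun k χ h => by simp at h⟩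
      | dia k χ =>
        by_cases hs : gsat M w (.dia k χ)
        · obtain ⟨s, hcard, hsv⟩ := gsat_dia_finset M w k χ hs
          refine ⟨s, fun v hv => (hsv v hv).1, ?_⟩
          rintro k' χ' h -
          injection h with h1 h2
          subst h1; subst h2
          exact ⟨hcard, fun v hv => (hsv v hv).2⟩
        · refine ⟨∅, by simp, ?_⟩
          rintro k' χ' h hs'
          injection h with h1 h2
          subst h1; subst h2
          exact absurd hs' hs
    choose pickF hpickR hpickD using hex
    have hCsub' : ∀ L : List (GML ℕ), ∀ ψ ∈ L,
        pickF ψ ⊆ L.foldr (fun ψ s => pickF ψ ∪ s) ∅ := by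
      intro L
      induction L with
      | nil => simp
      | cons a L ihL =>
        intro ψ hψ
        rcases List.mem_cons.mp hψ with rfl | h
        · exact Finset.subset_union_left
        · exact (ihL ψ h).trans Finset.subset_union_right
    have hCmem' : ∀ L : List (GML ℕ), ∀ v ∈ L.foldr (fun ψ s => pickF ψ ∪ s) ∅,
        ∃ ψ ∈ L, v ∈ pickF ψ := by
      intro L
      induction L with
      | nil => simp
      | cons a L ihL =>
        intro v hv
        rcases Finset.mem_union.mp hv with h | h
        · exact ⟨a, by simp, h⟩
        · obtain ⟨ψ, h1, h2⟩ := ihL v h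
          exact ⟨ψ, by simp [h1], h2⟩
    set C : Finset W := Γ.foldr (fun ψ s => pickF ψ ∪ s) ∅ with hCdef
    have hCsub : ∀ ψ ∈ Γ, pickF ψ ⊆ C := hCsub' Γ
    have hCR : ∀ v ∈ C, M.R w v := by
      intro v hv
      obtain ⟨ψ, h1, h2⟩ := hCmem' Γ v hv
      exact hpickR ψ v h2
    choose cW cM cr hFin hTree hIff using fun v : {v : W // v ∈ C} => IH Δ hclΔ hdΔ W M v.1
    haveI : ∀ v : {v : W // v ∈ C}, Finite (cW v) := hFin
    refine ⟨Option (Σ v : {v : W // v ∈ C}, cW v), glue cM cr (fun p => M.V p w), none,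
      Finite.of_equiv ((Σ v : {v : W // v ∈ C}, cW v) ⊕ PUnit.{1}) (Equiv.optionEquivSumPUnit _).symm, glue_isTree cM cr _ hTree, ?_⟩
    intro ψ
    induction ψ with
    | atom p => intro h; simp [gsat, glue]
    | neg φ ih => intro h; simp only [gsat]; rw [ih ((hcl _ h).1 φ rfl)]
    | and φ χ ih1 ih2 =>
      intro h
      obtain ⟨h1, h2⟩ := (hcl _ h).2.1 φ χ rfl
      simp only [gsat]; rw [ih1 h1, ih2 h2]
    | dia k χ ihχ =>
      intro h
      have hχΓ : χ ∈ Γ := (hcl _ h).2.2 k χ rfl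
      have hχΔ : χ ∈ Δ := by
        refine (hmemΔ χ).mpr ⟨hχΓ, ?_⟩
        have := hd _ h; simp only [depth] at this; omega
      constructor
      · rintro ⟨f, hinj, hf⟩
        have hr : ∀ j, ∃ i : {v : W // v ∈ C}, f j = some ⟨i, cr i⟩ := by
          intro j
          rcases (hf j).1 with ⟨i, h1, h2⟩ | ⟨i, x, y, h1, h2, h3⟩
          · exact ⟨i, h2⟩
          · exact absurd h1 (by simp)
        choose g hg using hr
        refine ⟨fun j => (g j).1, ?_, fun j => ?_⟩
        · intro j j' hjj
          apply hinj
          rw [hg j, hg j', Subtype.ext hjj]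
        · refine ⟨hCR _ (g j).2, ?_⟩
          have h2 := (hf j).2
          rw [hg j, gsat_glue] at h2
          exact (hIff (g j) χ hχΔ).mp h2
      · intro hM
        obtain ⟨hcard, hsv⟩ := hpickD (.dia k χ) k χ rfl hM
        obtain ⟨f0, hinj0, hf0⟩ := finset_to_inj (pickF (.dia k χ)) hcard
        have hsubC := hCsub _ h
        refine ⟨fun j => some ⟨⟨f0 j, hsubC (hf0 j)⟩, cr _⟩, ?_, fun j => ?_⟩
        · intro j j' hjj
          obtain ⟨he, -⟩ := osig hjj
          exact hinj0 (congrArg Subtype.val he)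
        · refine ⟨Or.inl ⟨_, rfl, rfl⟩, ?_⟩
          rw [gsat_glue]
          exact (hIff _ χ hχΔ).mpr (hsv _ (hf0 j))

end GMLTree

/-- GML has the finite tree model property: every satisfiable GML formula is
satisfied at the root of some finite tree model. -/
theorem gml_finite_tree_model_property (φ : GML ℕ)
    (hsat : ∃ (W : Type) (M : Kripke ℕ W) (w : W), gsat M w φ) :
    ∃ (W : Type) (M : Kripke ℕ W) (r : W),
      Finite W ∧ IsTree M r ∧ gsat M r φ := by
  obtain ⟨W, M, w, hw⟩ := hsat
  obtain ⟨T, N, r, hfin, htree, hiff⟩ := GMLTree.key (GMLTree.depth φ) (GMLTree.subs φ)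
    (GMLTree.closed_subs φ) (fun ψ h => GMLTree.depth_subs φ ψ h) W M w
  exact ⟨T, N, r, hfin, htree, (hiff φ (GMLTree.mem_subs_self φ)).mpr hw⟩
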